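/- With notation as above, one has the second hook recursion: $X_{p,q+1} = f_{-(q+1)} \cdot s_{-(q+1)}(X_{p,q})$, where $s_{-(q+1)}$ acts by $\alpha_{-(q+1)} \mapsto -\alpha_{-(q+1)}$, $\alpha_{-(q+1)\pm1} \mapsto \alpha_{-(q+1)\pm1} + \alpha_{-(q+1)}$, $f_{-(q+1)\pm1} \mapsto f_{-(q+1)\pm1} \pm \alpha_{-(q+1)}/f_{-(q+1)}$, fixing all other generators. -/

import Mathlib

/-- The subdiagonal entries of `X_{p,q}`: `βⱼ = αⱼ + ⋯ + α_{p-1} = vⱼ - v_p` for `j > 0`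
and `βⱼ = -(α_{-q} + ⋯ + α_{j-1}) = vⱼ - v_{-q+1}` for `j ≤ 0`. -/
noncomputable def betaF {K : Type*} [Field K] (p q : ℕ) (α : ℤ → K) (j : ℤ) : K :=
  if 0 < j then ∑ i ∈ Finset.Icc j ((p : ℤ) - 1), α i
  else -∑ i ∈ Finset.Icc (-(q : ℤ)) (j - 1), α i

/-- `X_{p,q}`: the determinant of the `(p+q) × (p+q)` tridiagonal matrix with diagonal
`f_{-q},…,f_{p-1}`, superdiagonal `1`'s and subdiagonal `β_{-q+1},…,β_{p-1}`. -/
noncomputable def Xdet {K : Type*} [Field K] (p q : ℕ) (α f : ℤ → K) : K :=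
  (Matrix.of fun r c : Fin (p + q) =>
    if (r : ℕ) = c then f ((r : ℤ) - q)
    else if (c : ℕ) = (r : ℕ) + 1 then 1
    else if (r : ℕ) = (c : ℕ) + 1 then betaF p q α ((r : ℤ) - q)
    else 0).det

section Trid
variable {K : Type*} [Field K]

/-- The tridiagonal matrix with diagonal `d 0, …, d (n-1)`, superdiagonal `1`'s and
subdiagonal `b 1, …, b (n-1)` (indexed by row). -/
def tridM (d b : ℕ → K) (n : ℕ) : Matrix (Fin n) (Fin n) K :=
  Matrix.of fun r c => if (r : ℕ) = (c : ℕ) then d r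
    else if (c : ℕ) = (r : ℕ) + 1 then 1
    else if (r : ℕ) = (c : ℕ) + 1 then b r else 0

/-- The continuant recursion for leading principal minors of `tridM`. -/
def cont (d b : ℕ → K) : ℕ → K
  | 0 => 1
  | 1 => d 0
  | (n+2) => d (n+1) * cont d b (n+1) - b (n+1) * cont d b n

lemma succAbove_castSucc_last_val (n : ℕ) (k : Fin (n+1)) :
    (((Fin.last n).castSucc.succAbove k : Fin (n+2)) : ℕ) =
      if (k : ℕ) < n then (k : ℕ) else (k : ℕ) + 1 := by
  by_cases h : (k : ℕ) < n
  · rw [Fin.succAbove_of_castSucc_lt _ _ (by simp [Fin.lt_def, h])]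
    simp [h]
  · rw [Fin.succAbove_of_le_castSucc _ _ (by simp [Fin.le_def]; omega)]
    simp [h]

lemma tridM_sub1 (d b : ℕ → K) (n : ℕ) :
    (tridM d b (n+1)).submatrix Fin.castSucc Fin.castSucc = tridM d b n := by
  ext r c
  simp [tridM, Matrix.submatrix_apply]

lemma tridM_minor_det (d b : ℕ → K) (n : ℕ) :
    ((tridM d b (n+2)).submatrix Fin.castSucc ((Fin.last n).castSucc.succAbove)).det
      = (tridM d b n).det := by
  rw [Matrix.det_succ_column _ (Fin.last n)]
  rw [Finset.sum_eq_single (Fin.last n)]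
  · have hval : (((Fin.last n).castSucc.succAbove (Fin.last n) : Fin (n+2)) : ℕ) = n + 1 := by
      rw [succAbove_castSucc_last_val]; simp
    have hentry : ((tridM d b (n+2)).submatrix Fin.castSucc ((Fin.last n).castSucc.succAbove))
        (Fin.last n) (Fin.last n) = 1 := by
      simp only [Matrix.submatrix_apply, tridM, Matrix.of_apply, Fin.coe_castSucc, hval]
      simp
    rw [hentry]
    have hminor : ((tridM d b (n+2)).submatrix Fin.castSucc
        ((Fin.last n).castSucc.succAbove)).submatrix (Fin.last n).succAbove (Fin.last n).succAbove
        = tridM d b n := by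
      rw [Fin.succAbove_last]
      ext r c
      have : (((Fin.last n).castSucc.succAbove (Fin.castSucc c) : Fin (n+2)) : ℕ) = (c : ℕ) := by
        rw [succAbove_castSucc_last_val]; simp [c.isLt]
      simp only [Matrix.submatrix_apply, tridM, Matrix.of_apply, Fin.coe_castSucc, this]
    rw [hminor]
    have : ((-1 : K)) ^ ((Fin.last n : ℕ) + (Fin.last n : ℕ)) = 1 :=
      Even.neg_one_pow ⟨n, by simp⟩
    rw [this]; ring
  · intro i _ hi
    have hil : (i : ℕ) < n := by
      have h1 := i.isLt
      have h2 : (i : ℕ) ≠ n := fun h => hi (Fin.ext (by simp [h]))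
      omega
    have hval : (((Fin.last n).castSucc.succAbove (Fin.last n) : Fin (n+2)) : ℕ) = n + 1 := by
      rw [succAbove_castSucc_last_val]; simp
    have hentry : ((tridM d b (n+2)).submatrix Fin.castSucc ((Fin.last n).castSucc.succAbove))
        i (Fin.last n) = 0 := by
      simp only [Matrix.submatrix_apply, tridM, Matrix.of_apply, Fin.coe_castSucc, hval]
      split_ifs <;> first | rfl | omega
    rw [hentry]; ring
  · simp

lemma tridM_det (d b : ℕ → K) : ∀ n, (tridM d b n).det = cont d b n := by
  intro n
  induction n using Nat.twoStepInduction with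
  | zero => simp [cont, Matrix.det_fin_zero]
  | one => simp [cont, Matrix.det_fin_one, tridM]
  | more n ih1 ih2 =>
    rw [Matrix.det_succ_row (tridM d b (n+2)) (Fin.last (n+1))]
    rw [Finset.sum_eq_add_of_mem ((Fin.last n).castSucc) (Fin.last (n+1))
      (Finset.mem_univ _) (Finset.mem_univ _)
      (by intro h; have := congrArg Fin.val h; simp at this)
      (by
        intro j _ hj
        have h1 : (j : ℕ) ≠ n := fun h => hj.1 (Fin.ext (by simp [h]))
        have h2 : (j : ℕ) ≠ n + 1 := fun h => hj.2 (Fin.ext (by simp [h]))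
        have := j.isLt
        have hz : tridM d b (n+2) (Fin.last (n+1)) j = 0 := by
          simp only [tridM, Matrix.of_apply, Fin.val_last]
          split_ifs <;> first | rfl | omega
        rw [hz]; ring)]
    have e1 : tridM d b (n+2) (Fin.last (n+1)) ((Fin.last n).castSucc) = b (n+1) := by
      simp only [tridM, Matrix.of_apply, Fin.val_last, Fin.coe_castSucc]
      split_ifs <;> first | rfl | omega
    have e2 : tridM d b (n+2) (Fin.last (n+1)) (Fin.last (n+1)) = d (n+1) := by
      simp [tridM]
    rw [e1, e2, Fin.succAbove_last, tridM_minor_det, tridM_sub1, ih1, ih2]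
    have s1 : ((-1 : K)) ^ ((Fin.last (n+1) : ℕ) + ((Fin.last n).castSucc : ℕ)) = -1 :=
      Odd.neg_one_pow ⟨n, by simp; ring⟩
    have s2 : ((-1 : K)) ^ ((Fin.last (n+1) : ℕ) + (Fin.last (n+1) : ℕ)) = 1 :=
      Even.neg_one_pow ⟨n+1, by simp⟩
    rw [s1, s2, cont]
    ring

lemma cont_shift (d b d' b' : ℕ → K) (F : K)
    (hd : ∀ i : ℕ, 1 ≤ i → d (i+1) = d' i) (hb : ∀ i : ℕ, 1 ≤ i → b (i+1) = b' i)
    (hd0 : d 0 = F) (h2 : d 1 * F - b 1 = F * d' 0) :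
    ∀ n, cont d b (n+1) = F * cont d' b' n := by
  intro n
  induction n using Nat.twoStepInduction with
  | zero => simp [cont, hd0]
  | one => simp only [cont, hd0, mul_one]; rw [← h2]
  | more n ih1 ih2 =>
    show cont d b ((n+1)+2) = _
    rw [cont, ih2, ih1, show n+1+1 = (n+1)+1 from rfl, hd (n+1) (by omega),
      hb (n+1) (by omega)]
    conv_rhs => rw [cont]
    ring

lemma sum_Icc_bot (g : ℤ → K) (a c : ℤ) (h : a ≤ c) :
    ∑ i ∈ Finset.Icc a c, g i = g a + ∑ i ∈ Finset.Icc (a+1) c, g i := by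
  have : Finset.Icc a c = insert a (Finset.Icc (a+1) c) := by
    ext x; simp [Finset.mem_Icc]; omega
  rw [this, Finset.sum_insert (by simp [Finset.mem_Icc])]

lemma Xdet_eq_cont (p q : ℕ) (α f : ℤ → K) :
    Xdet p q α f = cont (fun i : ℕ => f ((i : ℤ) - q))
      (fun i : ℕ => betaF p q α ((i : ℤ) - q)) (p + q) := by
  rw [← tridM_det]
  unfold Xdet tridM
  congr 1

end Trid

/-- Second hook recursion of Lemma 4: `X_{p,q+1} = f_{-(q+1)} · s_{-(q+1)}(X_{p,q})`, where
`s_{-(q+1)}` acts by `α_{-(q+1)} ↦ -α_{-(q+1)}`, `α_{-(q+1)±1} ↦ α_{-(q+1)±1} + α_{-(q+1)}`,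
`f_{-(q+1)±1} ↦ f_{-(q+1)±1} ± α_{-(q+1)}/f_{-(q+1)}`, fixing all other generators. -/
theorem stmt_10 {K : Type*} [Field K] (p q : ℕ) (hp : 1 ≤ p)
    (α f : ℤ → K) (hf : f (-((q : ℤ) + 1)) ≠ 0) :
    Xdet p (q + 1) α f =
      f (-((q : ℤ) + 1)) * Xdet p q
        (fun j => if j = -((q : ℤ) + 1) then -α (-((q : ℤ) + 1))
          else if j = -((q : ℤ) + 1) - 1 ∨ j = -((q : ℤ) + 1) + 1 then
            α j + α (-((q : ℤ) + 1))
          else α j)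
        (fun j => if j = -((q : ℤ) + 1) + 1 then
            f (-((q : ℤ) + 1) + 1) + α (-((q : ℤ) + 1)) / f (-((q : ℤ) + 1))
          else if j = -((q : ℤ) + 1) - 1 then
            f (-((q : ℤ) + 1) - 1) - α (-((q : ℤ) + 1)) / f (-((q : ℤ) + 1))
          else f j) := by
  set α' : ℤ → K := fun j => if j = -((q : ℤ) + 1) then -α (-((q : ℤ) + 1))
    else if j = -((q : ℤ) + 1) - 1 ∨ j = -((q : ℤ) + 1) + 1 then α j + α (-((q : ℤ) + 1))
    else α j with hα'
  set f' : ℤ → K := fun j => if j = -((q : ℤ) + 1) + 1 then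
      f (-((q : ℤ) + 1) + 1) + α (-((q : ℤ) + 1)) / f (-((q : ℤ) + 1))
    else if j = -((q : ℤ) + 1) - 1 then
      f (-((q : ℤ) + 1) - 1) - α (-((q : ℤ) + 1)) / f (-((q : ℤ) + 1))
    else f j with hf'
  rw [Xdet_eq_cont, Xdet_eq_cont]
  rw [show p + (q + 1) = (p + q) + 1 by omega]
  refine cont_shift _ _ _ _ _ ?_ ?_ ?_ ?_ (p + q)
  · -- diagonal entries match for i ≥ 1
    intro i hi
    show f (((i + 1 : ℕ) : ℤ) - ((q + 1 : ℕ) : ℤ)) = f' ((i : ℤ) - q)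
    rw [hf']
    simp only
    rw [if_neg (by omega), if_neg (by omega)]
    congr 1
    push_cast; ring
  · -- subdiagonal entries match for i ≥ 1
    intro i hi
    show betaF p (q + 1) α (((i + 1 : ℕ) : ℤ) - ((q + 1 : ℕ) : ℤ)) = betaF p q α' ((i : ℤ) - q)
    have harg : (((i + 1 : ℕ) : ℤ) - ((q + 1 : ℕ) : ℤ)) = (i : ℤ) - q := by push_cast; ring
    rw [harg]
    set j : ℤ := (i : ℤ) - q with hj
    have hji : -(q : ℤ) + 1 ≤ j := by omega
    unfold betaF
    by_cases hjpos : 0 < j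
    · rw [if_pos hjpos, if_pos hjpos]
      refine Finset.sum_congr rfl fun x hx => ?_
      have hxj := (Finset.mem_Icc.mp hx).1
      rw [hα']
      simp only
      rw [if_neg (by omega), if_neg (by push_neg; constructor <;> omega)]
    · rw [if_neg hjpos, if_neg hjpos]
      have hcast : -((q + 1 : ℕ) : ℤ) = -((q : ℤ) + 1) := by push_cast; ring
      rw [hcast]
      have h1 : -((q : ℤ) + 1) ≤ j - 1 := by omega
      have h2 : -(q : ℤ) ≤ j - 1 := by omega
      rw [sum_Icc_bot α _ _ h1, show -((q : ℤ) + 1) + 1 = -(q : ℤ) by ring,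
        sum_Icc_bot α _ _ h2, sum_Icc_bot α' _ _ h2]
      have hα'q : α' (-(q : ℤ)) = α (-(q : ℤ)) + α (-((q : ℤ) + 1)) := by
        rw [hα']
        simp only
        rw [if_neg (by omega), if_pos (by right; ring)]
      have hsum : ∑ x ∈ Finset.Icc (-(q : ℤ) + 1) (j - 1), α' x
          = ∑ x ∈ Finset.Icc (-(q : ℤ) + 1) (j - 1), α x := by
        refine Finset.sum_congr rfl fun x hx => ?_
        have hx1 := (Finset.mem_Icc.mp hx).1
        rw [hα']
        simp only
        rw [if_neg (by omega), if_neg (by push_neg; constructor <;> omega)]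
      rw [hα'q, hsum]
      ring
  · -- d 0 = F
    show f (((0 : ℕ) : ℤ) - ((q + 1 : ℕ) : ℤ)) = f (-((q : ℤ) + 1))
    congr 1
  · -- the modified initial condition
    have hb1 : betaF p (q + 1) α (((1 : ℕ) : ℤ) - ((q + 1 : ℕ) : ℤ)) = -α (-((q : ℤ) + 1)) := by
      have harg : (((1 : ℕ) : ℤ) - ((q + 1 : ℕ) : ℤ)) = -(q : ℤ) := by push_cast; ring
      rw [harg]
      unfold betaF
      rw [if_neg (by omega)]
      have hic : Finset.Icc (-((q + 1 : ℕ) : ℤ)) (-(q : ℤ) - 1) = {-((q : ℤ) + 1)} := by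
        have e1 : -((q + 1 : ℕ) : ℤ) = -((q : ℤ) + 1) := by push_cast; ring
        have e2 : -(q : ℤ) - 1 = -((q : ℤ) + 1) := by ring
        rw [e1, e2, Finset.Icc_self]
      rw [hic, Finset.sum_singleton]
    show f (((1 : ℕ) : ℤ) - ((q + 1 : ℕ) : ℤ)) * f (-((q : ℤ) + 1))
        - betaF p (q + 1) α (((1 : ℕ) : ℤ) - ((q + 1 : ℕ) : ℤ))
      = f (-((q : ℤ) + 1)) * f' (((0 : ℕ) : ℤ) - (q : ℤ))
    rw [hb1, hf']
    simp only
    rw [if_pos (by push_cast; ring)]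
    have harg : (((1 : ℕ) : ℤ) - ((q + 1 : ℕ) : ℤ)) = -((q : ℤ) + 1) + 1 := by push_cast; ring
    rw [harg, mul_add, mul_div_cancel₀ _ hf]
    ring
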